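/- (Closed-form solution of the gradient-tracking recursion, equation used to derive Lemma 3.2.) Let α ∈ ℝ, let W^{(0)}, W^{(1)}, … ∈ ℝ^{N×N} be any matrices, let G^{(0)}, G^{(1)}, … ∈ ℝ^{N} be any vectors with the convention G^{(−1)} := 0, and let x^{(k)}, g^{(k)} ∈ ℝ^{N} satisfy x^{(k+1)} = W^{(k)}(x^{(k)} − α·g^{(k)}), g^{(k+1)} = W^{(k)} g^{(k)} + G^{(k+1)} − G^{(k)}, with g^{(0)} = G^{(0)}. Then for every k ≥ 1: x^{(k)} = (W^{(k−1)}·W^{(k−2)}·⋯·W^{(0)})·x^{(0)} − α·Σ_{j=0}^{k−1} (k−j)·(W^{(k−1)}·⋯·W^{(j)})·(G^{(j)} − G^{(j−1)}). -/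

import Mathlib

open Matrix

noncomputable section

def prodDesc {N : ℕ} (W : ℕ → Matrix (Fin N) (Fin N) ℝ) (a b : ℕ) :
    Matrix (Fin N) (Fin N) ℝ :=
  ((List.range (a + 1 - b)).map (fun t => W (a - t))).prod

lemma prodDesc_empty {N : ℕ} (W : ℕ → Matrix (Fin N) (Fin N) ℝ) (a : ℕ) :
    prodDesc W a (a + 1) = 1 := by
  simp [prodDesc]

lemma prodDesc_self {N : ℕ} (W : ℕ → Matrix (Fin N) (Fin N) ℝ) (a : ℕ) :
    prodDesc W a a = W a := by
  have h : a + 1 - a = 1 := by omega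
  rw [prodDesc, h]
  simp [List.range_succ]

lemma prodDesc_succ {N : ℕ} (W : ℕ → Matrix (Fin N) (Fin N) ℝ) (a b : ℕ) (h : b ≤ a + 1) :
    prodDesc W (a + 1) b = W (a + 1) * prodDesc W a b := by
  unfold prodDesc
  have h1 : a + 1 + 1 - b = (a + 1 - b) + 1 := by omega
  rw [h1, List.range_succ_eq_map, List.map_cons, List.map_map, List.prod_cons]
  simp [Function.comp_def, Nat.succ_sub_succ]

lemma mulVec_sum' {N : ℕ} (A : Matrix (Fin N) (Fin N) ℝ) {ι : Type*} (s : Finset ι)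
    (f : ι → Fin N → ℝ) : A *ᵥ (∑ j ∈ s, f j) = ∑ j ∈ s, A *ᵥ f j := by
  induction s using Finset.cons_induction with
  | empty => simp [Matrix.mulVec_zero]
  | cons a s ha ih => simp [Finset.sum_cons, Matrix.mulVec_add, ih]

/-- **Closed-form solution of the gradient-tracking recursion (used to derive Lemma 3.2).**
If `x^{(k+1)} = W^{(k)}(x^{(k)} - α g^{(k)})`, `g^{(k+1)} = W^{(k)} g^{(k)} + G^{(k+1)} - G^{(k)}`
with `g^{(0)} = G^{(0)}` and the convention `G^{(-1)} = 0`, then for every `k ≥ 1`,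
`x^{(k)} = (W^{(k-1)} ⋯ W^{(0)}) x^{(0)}
  - α ∑_{j=0}^{k-1} (k-j) (W^{(k-1)} ⋯ W^{(j)}) (G^{(j)} - G^{(j-1)})`. -/
theorem gt_recursion_closed_form {N : ℕ} (α : ℝ)
    (W : ℕ → Matrix (Fin N) (Fin N) ℝ)
    (G : ℤ → (Fin N → ℝ)) (hGm1 : G (-1) = 0)
    (x g : ℕ → (Fin N → ℝ))
    (hx : ∀ k, x (k + 1) = W k *ᵥ (x k - α • g k))
    (hg : ∀ k, g (k + 1) = W k *ᵥ g k + G ((k : ℤ) + 1) - G (k : ℤ))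
    (hg0 : g 0 = G 0) :
    ∀ k : ℕ, 1 ≤ k →
      x k = (prodDesc W (k - 1) 0) *ᵥ x 0
        - α • ∑ j ∈ Finset.range k,
            ((k : ℝ) - (j : ℝ)) • ((prodDesc W (k - 1) j) *ᵥ (G (j : ℤ) - G ((j : ℤ) - 1))) := by
  set D : ℕ → (Fin N → ℝ) := fun j => G (j : ℤ) - G ((j : ℤ) - 1) with hD
  have hD0 : D 0 = G 0 := by simp [hD, hGm1]
  -- closed form for g
  have hgc : ∀ k, g (k + 1) = ∑ j ∈ Finset.range (k + 2), prodDesc W k j *ᵥ D j := by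
    intro k
    induction k with
    | zero =>
      rw [hg 0, hg0, Finset.sum_range_succ, Finset.sum_range_one, prodDesc_empty,
        prodDesc_self, hD0, one_mulVec]
      have h1 : D 1 = G ((0 : ℤ) + 1) - G (0 : ℤ) := by
        simp only [hD]; norm_num
      rw [h1]
      abel
    | succ k ih =>
      have hsum : ∀ j ∈ Finset.range (k + 2),
          W (k + 1) *ᵥ (prodDesc W k j *ᵥ D j) = prodDesc W (k + 1) j *ᵥ D j := by
        intro j hj
        have hj' : j ≤ k + 1 := by have := Finset.mem_range.mp hj; omega
        rw [mulVec_mulVec, prodDesc_succ W k j hj']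
      rw [hg (k + 1), ih, mulVec_sum', Finset.sum_range_succ (n := k + 2),
        prodDesc_empty, one_mulVec, Finset.sum_congr rfl hsum]
      have hA : D (k + 2) = G ((((k + 1) : ℕ) : ℤ) + 1) - G (((k + 1 : ℕ)) : ℤ) := by
        have e1 : ((k + 2 : ℕ) : ℤ) = (((k + 1) : ℕ) : ℤ) + 1 := by push_cast; ring
        have e2 : ((k + 2 : ℕ) : ℤ) - 1 = (((k + 1) : ℕ) : ℤ) := by push_cast; ring
        simp only [hD]
        rw [e1]
        norm_num
      rw [hA]
      abel
  -- closed form for x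
  have hxc : ∀ k, x (k + 1) = prodDesc W k 0 *ᵥ x 0
      - α • ∑ j ∈ Finset.range (k + 2),
          (((k + 1 : ℕ) : ℝ) - (j : ℝ)) • (prodDesc W k j *ᵥ D j) := by
    intro k
    induction k with
    | zero =>
      rw [hx 0, hg0, Finset.sum_range_succ, Finset.sum_range_one, prodDesc_empty,
        prodDesc_self, hD0, one_mulVec, mulVec_sub, mulVec_smul]
      norm_num
    | succ k ih =>
      have hstep : ∀ j ∈ Finset.range (k + 2),
          prodDesc W (k + 1) j = W (k + 1) * prodDesc W k j := by
        intro j hj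
        exact prodDesc_succ W k j (by have := Finset.mem_range.mp hj; omega)
      rw [hx (k + 1), ih, hgc k, mulVec_sub, mulVec_sub, mulVec_smul, mulVec_smul,
        mulVec_mulVec, mulVec_sum', mulVec_sum']
      simp only [mulVec_smul, mulVec_mulVec]
      rw [Finset.sum_range_succ (n := k + 2)]
      have hzero : (((k + 1 + 1 : ℕ) : ℝ) - ((k + 2 : ℕ) : ℝ)) = 0 := by push_cast; ring
      rw [hzero, zero_smul, add_zero]
      have hcong : ∀ j ∈ Finset.range (k + 2),
          (((k + 1 + 1 : ℕ) : ℝ) - (j : ℝ)) • (prodDesc W (k + 1) j *ᵥ D j)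
            = (((k + 1 : ℕ) : ℝ) - (j : ℝ)) • ((W (k + 1) * prodDesc W k j) *ᵥ D j)
              + (W (k + 1) * prodDesc W k j) *ᵥ D j := by
        intro j hj
        rw [hstep j hj]
        have hc : (((k + 1 + 1 : ℕ) : ℝ) - (j : ℝ))
            = (((k + 1 : ℕ) : ℝ) - (j : ℝ)) + 1 := by push_cast; ring
        rw [hc, add_smul, one_smul]
      rw [Finset.sum_congr rfl hcong, Finset.sum_add_distrib, smul_add,
        ← prodDesc_succ W k 0 (by omega)]
      abel
  intro k hk
  obtain ⟨m, rfl⟩ : ∃ m, k = m + 1 := ⟨k - 1, by omega⟩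
  have hm := hxc m
  rw [Finset.sum_range_succ] at hm
  have hz : (((m + 1 : ℕ) : ℝ) - ((m + 1 : ℕ) : ℝ)) = 0 := by ring
  rw [hz, zero_smul, add_zero] at hm
  rw [Nat.add_sub_cancel, hm]
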